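/- Let a_1 > 0 and a_2, ..., a_m ≥ 0 be real numbers with partial sums s_i = a_1 + ... + a_i. Then ∑_{i=1}^m a_i / s_i ≤ 1 + ln(s_m / a_1). -/

import Mathlib

open scoped BigOperators

lemma key_step (S d : ℝ) (hS : 0 < S) (hd : 0 ≤ d) :
    d / (S + d) ≤ Real.log ((S + d) / S) := by
  have hSd : 0 < S + d := by linarith
  have h := Real.log_le_sub_one_of_pos (show 0 < S / (S + d) by positivity)
  have hlog : Real.log (S / (S + d)) = - Real.log ((S + d) / S) := by
    rw [Real.log_div hS.ne' hSd.ne', Real.log_div hSd.ne' hS.ne']; ring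
  rw [hlog] at h
  have : S / (S + d) - 1 = - (d / (S + d)) := by field_simp; ring
  linarith [this ▸ h]

/-- For `a 1 > 0`, `a i ≥ 0` (`2 ≤ i ≤ m`) and partial sums `s i = a 1 + ⋯ + a i`,
`∑_{i=1}^m a i / s i ≤ 1 + ln (s m / a 1)`. -/
theorem stmt_1 (m : ℕ) (hm : 1 ≤ m) (a : ℕ → ℝ)
    (ha1 : 0 < a 1) (ha : ∀ i, 2 ≤ i → i ≤ m → 0 ≤ a i) :
    ∑ i ∈ Finset.Icc 1 m, a i / (∑ j ∈ Finset.Icc 1 i, a j) ≤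
      1 + Real.log ((∑ j ∈ Finset.Icc 1 m, a j) / a 1) := by
  induction m, hm using Nat.le_induction with
  | base =>
    simp [Real.log_div, div_self ha1.ne']
  | succ m hm ih =>
    have ha' : ∀ i, 2 ≤ i → i ≤ m → 0 ≤ a i := fun i h2 hi => ha i h2 (by omega)
    have IH := ih ha'
    set S : ℝ := ∑ j ∈ Finset.Icc 1 m, a j with hSdef
    have hS : 0 < S := by
      apply Finset.sum_pos' (fun i hi => ?_) ⟨1, Finset.mem_Icc.2 ⟨le_refl 1, hm⟩, ha1⟩
      rcases Finset.mem_Icc.1 hi with ⟨h1, h2⟩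
      rcases eq_or_lt_of_le h1 with h | h
      · exact (h ▸ ha1).le
      · exact ha' i h h2
    have hd : 0 ≤ a (m + 1) := ha (m + 1) (by omega) le_rfl
    have hsplit : ∀ f : ℕ → ℝ, ∑ i ∈ Finset.Icc 1 (m + 1), f i
        = (∑ i ∈ Finset.Icc 1 m, f i) + f (m + 1) := fun f =>
      Finset.sum_Icc_succ_top (by omega) f
    rw [hsplit, hsplit]
    have hSd : 0 < S + a (m + 1) := by linarith
    have hkey := key_step S (a (m + 1)) hS hd
    have hlog : Real.log ((S + a (m + 1)) / a 1)
        = Real.log (S / a 1) + Real.log ((S + a (m + 1)) / S) := by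
      rw [Real.log_div hSd.ne' ha1.ne', Real.log_div hS.ne' ha1.ne',
        Real.log_div hSd.ne' hS.ne']; ring
    rw [hlog]
    linarith [IH]
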